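/- Let (X,𝒳,μ) be a probability space and let f, g be commuting measure-preserving transformations on X such that μ({x : f(x) = g(x)}) = 0. Then for every measurable set Y and every ε > 0, there exists a measurable set B ⊆ f⁻¹(Y) with μ(B) ≥ (μ(Y) − ε)/4 and f⁻¹(B) ∩ g⁻¹(B) = ∅. -/

import Mathlib

open MeasureTheory ENNReal

open Finset in
theorem aux_parity (T : Finset ℕ) (p r : ℕ → Prop) [DecidablePred p] [DecidablePred r] :
    (¬(Odd (T.filter p).card ↔ Odd (T.filter r).card)) ↔
      Odd ((T.filter fun n => ¬(p n ↔ r n)).card) := by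
  classical
  induction T using Finset.induction with
  | empty => simp
  | @insert a T ha ih =>
    rw [Finset.filter_insert, Finset.filter_insert, Finset.filter_insert]
    by_cases hp : p a <;> by_cases hr : r a <;>
      simp only [hp, hr, if_true, if_false, iff_true, iff_false, not_true, not_false_iff,
        if_pos, if_neg, Finset.card_insert_of_notMem (by simp [ha] : a ∉ T.filter p),
        Finset.card_insert_of_notMem (by simp [ha] : a ∉ T.filter r),
        Finset.card_insert_of_notMem (by simp [ha] : a ∉ T.filter fun n => ¬(p n ↔ r n)),
        Nat.odd_iff] at ih ⊢ <;> omega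


open Finset in
theorem aux_count (s V : Finset ℕ) (hV : V ⊆ s) (hne : V.Nonempty) :
    2 ^ s.card ≤ 2 * ((s.powerset.filter (fun T => Odd ((T ∩ V).card))).card) := by
  classical
  obtain ⟨n₀, hn₀⟩ := hne
  set i : Finset ℕ → Finset ℕ := fun T => if n₀ ∈ T then T.erase n₀ else insert n₀ T with hi
  have hii : ∀ T, i (i T) = T := by
    intro T
    by_cases h : n₀ ∈ T
    · simp [hi, h, Finset.notMem_erase, Finset.insert_erase h]
    · simp [hi, h, Finset.erase_insert h]
  have hflip : ∀ T, ¬(Odd ((i T ∩ V).card) ↔ Odd ((T ∩ V).card)) := by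
    intro T
    by_cases h : n₀ ∈ T
    · have hmem : n₀ ∈ T ∩ V := Finset.mem_inter.2 ⟨h, hn₀⟩
      have : (T.erase n₀) ∩ V = (T ∩ V).erase n₀ := by
        ext m; by_cases hm : m = n₀ <;> simp [hm, Finset.mem_erase]
      have hcard := Finset.card_erase_add_one hmem
      simp only [hi, if_pos h, this, Nat.odd_iff] at *
      omega
    · have hmem : n₀ ∉ T ∩ V := by simp [h]
      have : (insert n₀ T) ∩ V = insert n₀ (T ∩ V) := by
        ext m; by_cases hm : m = n₀ <;> simp [hm, hn₀]
      have hcard := Finset.card_insert_of_notMem hmem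
      simp only [hi, if_neg h, this, hcard, Nat.odd_iff] at *
      omega
  have hmapsto : ∀ T ∈ s.powerset.filter (fun T => ¬ Odd ((T ∩ V).card)),
      i T ∈ s.powerset.filter (fun T => Odd ((T ∩ V).card)) := by
    intro T hT
    rw [Finset.mem_filter, Finset.mem_powerset] at hT ⊢
    constructor
    · by_cases h : n₀ ∈ T
      · simp only [hi, if_pos h]
        exact (Finset.erase_subset n₀ T).trans hT.1
      · simp only [hi, if_neg h]
        exact Finset.insert_subset (hV hn₀) hT.1
    · have := hflip T
      tauto
  have hinj : Set.InjOn i (s.powerset.filter (fun T => ¬ Odd ((T ∩ V).card))) := by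
    intro a _ b _ hab
    have := congrArg i hab
    rwa [hii, hii] at this
  have hle : (s.powerset.filter (fun T => ¬ Odd ((T ∩ V).card))).card ≤
      (s.powerset.filter (fun T => Odd ((T ∩ V).card))).card :=
    Finset.card_le_card_of_injOn i hmapsto hinj
  have hsum := Finset.card_filter_add_card_filter_not
    (s := s.powerset) (p := fun T => Odd ((T ∩ V).card))
  have hpow : s.powerset.card = 2 ^ s.card := Finset.card_powerset s
  omega

theorem stmt_0 {X : Type*} [MeasurableSpace X] [StandardBorelSpace X]
    (μ : Measure X) [IsProbabilityMeasure μ] [NullSingletonClass μ]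
    (f g : X → X)
    (hf : MeasurePreserving f μ μ) (hg : MeasurePreserving g μ μ)
    (hcomm : f ∘ g = g ∘ f)
    (hfg : μ {x | f x = g x} = 0)
    (Y : Set X) (hY : MeasurableSet Y) (ε : ℝ≥0∞) (hε : 0 < ε) :
    ∃ B : Set X, MeasurableSet B ∧ B ⊆ f ⁻¹' Y ∧
      (μ Y - ε) / 4 ≤ μ B ∧ f ⁻¹' B ∩ g ⁻¹' B = ∅ := by
  classical
  rcases le_or_gt (μ Y) ε with hle | hlt
  · refine ⟨∅, MeasurableSet.empty, Set.empty_subset _, ?_, by simp⟩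
    simp [tsub_eq_zero_of_le hle]
  obtain ⟨ψ, hψ⟩ := exists_measurableEmbedding_real X
  set q : ℕ → ℚ := fun n => (Denumerable.eqv ℚ).symm n with hq
  have hqsurj : Function.Surjective q := (Denumerable.eqv ℚ).symm.surjective
  set A : ℕ → Set X := fun n => ψ ⁻¹' (Set.Iio (q n : ℝ)) with hA
  have hAm : ∀ n, MeasurableSet (A n) := fun n => hψ.measurable measurableSet_Iio
  set E : Set X := f ⁻¹' Y with hE
  have hEm : MeasurableSet E := hf.measurable hY
  have hμE : μ E = μ Y := hf.measure_preimage hY.nullMeasurableSet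
  set D : ℕ → Set X := fun n => {x | ¬(f x ∈ A n ↔ g x ∈ A n)} with hD
  have hDeq : ∀ n, D n = (f ⁻¹' A n ∩ (g ⁻¹' A n)ᶜ) ∪ ((f ⁻¹' A n)ᶜ ∩ g ⁻¹' A n) := by
    intro n; ext x
    simp only [hD, Set.mem_setOf_eq, Set.mem_union, Set.mem_inter_iff, Set.mem_compl_iff,
      Set.mem_preimage]
    tauto
  have hDm : ∀ n, MeasurableSet (D n) := by
    intro n
    rw [hDeq n]
    exact ((hf.measurable (hAm n)).inter (hg.measurable (hAm n)).compl).union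
      ((hf.measurable (hAm n)).compl.inter (hg.measurable (hAm n)))
  -- coverage
  have hsep : ∀ x, x ∉ (⋃ n, D n) → f x = g x := by
    intro x hx
    by_contra hne
    have hψne : ψ (f x) ≠ ψ (g x) := fun h => hne (hψ.injective h)
    have hall : ∀ n, (f x ∈ A n ↔ g x ∈ A n) := by
      intro n
      by_contra hn
      exact hx (Set.mem_iUnion.2 ⟨n, hn⟩)
    rcases lt_or_gt_of_ne hψne with h | h
    · obtain ⟨r, hr1, hr2⟩ := exists_rat_btwn h
      obtain ⟨n, rfl⟩ := hqsurj r
      have h1 : f x ∈ A n := hr1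
      have h2 : g x ∈ A n := (hall n).1 h1
      exact absurd h2 (not_lt.2 hr2.le)
    · obtain ⟨r, hr1, hr2⟩ := exists_rat_btwn h
      obtain ⟨n, rfl⟩ := hqsurj r
      have h1 : g x ∈ A n := hr1
      have h2 : f x ∈ A n := (hall n).2 h1
      exact absurd h2 (not_lt.2 hr2.le)
  -- the union of the D n covers E up to a null set
  have hμcup : μ (E ∩ ⋃ n, D n) = μ Y := by
    have h0 : μ (E \ ⋃ n, D n) = 0 := by
      refine measure_mono_null ?_ hfg
      intro x hx
      exact hsep x hx.2
    have h1 : μ E ≤ μ (E ∩ ⋃ n, D n) + μ (E \ ⋃ n, D n) :=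
      (measure_mono (by intro x hx; by_cases h : x ∈ ⋃ n, D n <;> simp [hx, h])).trans
        (measure_union_le _ _)
    rw [h0, add_zero] at h1
    exact le_antisymm ((measure_mono Set.inter_subset_left).trans hμE.le) (hμE ▸ h1)
  -- choose a finite stage N
  set K : ℕ → Set X := fun N => E ∩ ⋃ n ∈ Finset.range N, D n with hK
  have hKm : ∀ N, MeasurableSet (K N) := fun N =>
    hEm.inter (Finset.measurableSet_biUnion _ fun n _ => hDm n)
  have hKmono : Monotone K := by
    intro a b hab
    refine Set.inter_subset_inter_right _ ?_
    refine Set.iUnion₂_subset fun n hn => ?_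
    exact Set.subset_iUnion₂ (s := fun n _ => D n) n (Finset.mem_range.2 <|
      lt_of_lt_of_le (Finset.mem_range.1 hn) hab)
  have hKU : ⋃ N, K N = E ∩ ⋃ n, D n := by
    ext x
    simp only [hK, Set.mem_iUnion, Set.mem_inter_iff, Finset.mem_range, Set.mem_iUnion]
    constructor
    · rintro ⟨N, hxE, n, hn, hxD⟩; exact ⟨hxE, n, hxD⟩
    · rintro ⟨hxE, n, hxD⟩; exact ⟨n + 1, hxE, n, Nat.lt_succ_self n, hxD⟩
  have htend : Filter.Tendsto (fun N => μ (K N)) Filter.atTop (nhds (μ Y)) := by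
    have := tendsto_measure_iUnion_atTop (μ := μ) hKmono
    rwa [hKU, hμcup] at this
  have hsub_lt : μ Y - ε < μ Y :=
    ENNReal.sub_lt_self (measure_ne_top μ Y) (lt_trans hε hlt).ne' hε.ne'
  obtain ⟨N, hN⟩ : ∃ N, μ Y - ε < μ (K N) :=
    (htend.eventually (eventually_gt_nhds hsub_lt)).exists
  have hδpos : (0 : ℝ≥0∞) < μ Y - ε := tsub_pos_iff_lt.2 hlt
  have hNpos : 0 < N := by
    rcases Nat.eq_zero_or_pos N with h | h
    · exfalso
      rw [h] at hN
      simp only [hK, Finset.range_zero, Finset.notMem_empty, Set.iUnion_of_empty,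
        Set.iUnion_empty, Set.inter_empty, measure_empty] at hN
      exact absurd hN (not_lt.2 hδpos.le)
    · exact h
  -- parity sets
  set AT : Finset ℕ → Set X := fun T => {y | Odd ((T.filter fun n => y ∈ A n).card)} with hAT
  have hATm : ∀ T, MeasurableSet (AT T) := by
    intro T
    have hc : Measurable fun y => ((T.filter fun n => y ∈ A n).card) := by
      have : (fun y => ((T.filter fun n => y ∈ A n).card))
          = fun y => ∑ n ∈ T, if y ∈ A n then 1 else 0 := by
        funext y; rw [Finset.card_filter]
      rw [this]
      exact Finset.measurable_sum _ fun n _ =>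
        Measurable.ite (hAm n) measurable_const measurable_const
    exact hc (MeasurableSet.of_discrete (s := {k | Odd k}))
  set DT : Finset ℕ → Set X := fun T => {x | ¬(f x ∈ AT T ↔ g x ∈ AT T)} with hDT
  have hDTm : ∀ T, MeasurableSet (DT T) := by
    intro T
    have : DT T = (f ⁻¹' AT T ∩ (g ⁻¹' AT T)ᶜ) ∪ ((f ⁻¹' AT T)ᶜ ∩ g ⁻¹' AT T) := by
      ext x
      simp only [hDT, Set.mem_setOf_eq, Set.mem_union, Set.mem_inter_iff, Set.mem_compl_iff,
        Set.mem_preimage]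
      tauto
    rw [this]
    exact ((hf.measurable (hATm T)).inter (hg.measurable (hATm T)).compl).union
      ((hf.measurable (hATm T)).compl.inter (hg.measurable (hATm T)))
  -- key counting estimate
  have key : (2 : ℝ≥0∞) ^ (N - 1) * μ (K N) ≤
      ∑ T ∈ (Finset.range N).powerset, μ (K N ∩ DT T) := by
    have hmeas : ∀ T ∈ (Finset.range N).powerset,
        Measurable ((K N ∩ DT T).indicator (1 : X → ℝ≥0∞)) := fun T _ =>
      measurable_one.indicator ((hKm N).inter (hDTm T))
    calc (2 : ℝ≥0∞) ^ (N - 1) * μ (K N)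
        = ∫⁻ x, (K N).indicator (fun _ => (2 : ℝ≥0∞) ^ (N - 1)) x ∂μ := by
          rw [lintegral_indicator_const (hKm N)]
      _ ≤ ∫⁻ x, ∑ T ∈ (Finset.range N).powerset, (K N ∩ DT T).indicator 1 x ∂μ := by
          refine lintegral_mono fun x => ?_
          by_cases hx : x ∈ K N
          · rw [Set.indicator_of_mem hx]
            -- count the subsets T for which x ∈ DT T
            set V : Finset ℕ := (Finset.range N).filter
              (fun n => ¬(f x ∈ A n ↔ g x ∈ A n)) with hV
            have hVs : V ⊆ Finset.range N := Finset.filter_subset _ _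
            have hVne : V.Nonempty := by
              obtain ⟨-, hxD⟩ := hx
              simp only [Set.mem_iUnion] at hxD
              obtain ⟨n, hn, hxd⟩ := hxD
              exact ⟨n, Finset.mem_filter.2 ⟨hn, hxd⟩⟩
            have hDT_iff : ∀ T ∈ (Finset.range N).powerset,
                (x ∈ DT T ↔ Odd ((T ∩ V).card)) := by
              intro T hT
              rw [Finset.mem_powerset] at hT
              have h1 : x ∈ DT T ↔
                  ¬(Odd ((T.filter fun n => f x ∈ A n).card) ↔
                    Odd ((T.filter fun n => g x ∈ A n).card)) := Iff.rfl
              rw [h1, aux_parity]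
              have h2 : (T.filter fun n => ¬(f x ∈ A n ↔ g x ∈ A n)) = T ∩ V := by
                ext n
                simp only [Finset.mem_filter, Finset.mem_inter, hV, Finset.mem_range]
                constructor
                · rintro ⟨hnT, hnd⟩
                  exact ⟨hnT, Finset.mem_range.1 (hT hnT), hnd⟩
                · rintro ⟨hnT, -, hnd⟩
                  exact ⟨hnT, hnd⟩
              rw [h2]
            calc (2 : ℝ≥0∞) ^ (N - 1)
                ≤ ((((Finset.range N).powerset.filter
                    (fun T => Odd ((T ∩ V).card))).card : ℕ) : ℝ≥0∞) := by
                  have hcnt := aux_count (Finset.range N) V hVs hVne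
                  rw [Finset.card_range] at hcnt
                  have h2N : 2 ^ (N - 1) ≤
                      ((Finset.range N).powerset.filter (fun T => Odd ((T ∩ V).card))).card := by
                    have : 2 * 2 ^ (N - 1) = 2 ^ N := by
                      rw [← pow_succ']
                      congr 1
                      omega
                    omega
                  calc (2 : ℝ≥0∞) ^ (N - 1) = ((2 ^ (N - 1) : ℕ) : ℝ≥0∞) := by push_cast; ring
                    _ ≤ _ := by exact_mod_cast Nat.cast_le.2 h2N
              _ = ∑ T ∈ (Finset.range N).powerset, (K N ∩ DT T).indicator 1 x := by
                  rw [eq_comm]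
                  have : ∀ T ∈ (Finset.range N).powerset,
                      (K N ∩ DT T).indicator (1 : X → ℝ≥0∞) x
                        = if Odd ((T ∩ V).card) then 1 else 0 := by
                    intro T hT
                    by_cases hxT : x ∈ DT T
                    · rw [Set.indicator_of_mem (Set.mem_inter hx hxT), Pi.one_apply, if_pos ((hDT_iff T hT).1 hxT)]
                    · rw [Set.indicator_of_notMem (fun h => hxT h.2),
                        if_neg (fun h => hxT ((hDT_iff T hT).2 h))]
                  rw [Finset.sum_congr rfl this, Finset.sum_boole]
          · rw [Set.indicator_of_notMem hx]
            exact zero_le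
      _ = ∑ T ∈ (Finset.range N).powerset, μ (K N ∩ DT T) := by
          rw [lintegral_finset_sum _ hmeas]
          exact Finset.sum_congr rfl fun T _ =>
            lintegral_indicator_one ((hKm N).inter (hDTm T))
  -- extract a good T
  have hple : ∃ T ∈ (Finset.range N).powerset, μ (K N) / 2 ≤ μ (K N ∩ DT T) := by
    set M : ℝ≥0∞ := (Finset.range N).powerset.sup (fun T => μ (K N ∩ DT T)) with hM
    have hsumle : ∑ T ∈ (Finset.range N).powerset, μ (K N ∩ DT T)
        ≤ (Finset.range N).powerset.card • M :=
      Finset.sum_le_card_nsmul _ _ M fun T hT => Finset.le_sup (f := fun T => μ (K N ∩ DT T)) hT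
    rw [Finset.card_powerset, Finset.card_range, nsmul_eq_mul] at hsumle
    have h2N : ((2 ^ N : ℕ) : ℝ≥0∞) = 2 ^ (N - 1) * 2 := by
      push_cast
      rw [← pow_succ]
      congr 1
      omega
    have hKM : μ (K N) ≤ 2 * M := by
      have h3 : (2 : ℝ≥0∞) ^ (N - 1) * μ (K N) ≤ 2 ^ (N - 1) * (2 * M) := by
        calc (2 : ℝ≥0∞) ^ (N - 1) * μ (K N) ≤ ((2 ^ N : ℕ) : ℝ≥0∞) * M := key.trans hsumle
          _ = 2 ^ (N - 1) * (2 * M) := by rw [h2N]; ring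
      exact (ENNReal.mul_le_mul_iff_right (pow_ne_zero _ two_ne_zero)
        (ENNReal.pow_ne_top ENNReal.ofNat_ne_top)).1 h3
    have hM2 : μ (K N) / 2 ≤ M := by
      rw [ENNReal.div_le_iff_le_mul (Or.inl two_ne_zero) (Or.inl ofNat_ne_top)]
      rwa [mul_comm] at hKM
    obtain ⟨T, hT, hTeq⟩ := Finset.exists_mem_eq_sup (Finset.range N).powerset
      ⟨∅, Finset.empty_mem_powerset _⟩ (fun T => μ (K N ∩ DT T))
    exact ⟨T, hT, hM2.trans_eq hTeq⟩
  obtain ⟨T, hTmem, hTge⟩ := hple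
  -- split into the two halves
  set B₁ : Set X := K N ∩ (f ⁻¹' AT T ∩ (g ⁻¹' AT T)ᶜ) with hB₁
  set B₂ : Set X := K N ∩ ((f ⁻¹' AT T)ᶜ ∩ g ⁻¹' AT T) with hB₂
  have hB₁m : MeasurableSet B₁ :=
    (hKm N).inter ((hf.measurable (hATm T)).inter (hg.measurable (hATm T)).compl)
  have hB₂m : MeasurableSet B₂ :=
    (hKm N).inter ((hf.measurable (hATm T)).compl.inter (hg.measurable (hATm T)))
  have hsplit : μ (K N ∩ DT T) = μ B₁ + μ B₂ := by
    have hdisj : Disjoint B₁ B₂ := by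
      refine Set.disjoint_left.2 fun x hx1 hx2 => ?_
      exact hx2.2.1 hx1.2.1
    have hun : K N ∩ DT T = B₁ ∪ B₂ := by
      ext x
      simp only [hB₁, hB₂, hDT, Set.mem_inter_iff, Set.mem_union, Set.mem_setOf_eq,
        Set.mem_compl_iff, Set.mem_preimage]
      tauto
    rw [hun, measure_union hdisj hB₂m]
  -- bound: one of the halves is large
  have hKbound : (μ Y - ε) / 4 ≤ μ (K N) / 4 := by
    exact ENNReal.div_le_div_right hN.le 4
  have hquarter : μ (K N) / 4 ≤ max (μ B₁) (μ B₂) := by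
    have h1 : μ (K N) / 2 ≤ μ B₁ + μ B₂ := hsplit ▸ hTge
    have h2 : μ B₁ + μ B₂ ≤ 2 * max (μ B₁) (μ B₂) := by
      rw [two_mul]
      exact add_le_add (le_max_left _ _) (le_max_right _ _)
    have h3 : μ (K N) / 2 ≤ 2 * max (μ B₁) (μ B₂) := h1.trans h2
    have h4 : μ (K N) ≤ (2 * max (μ B₁) (μ B₂)) * 2 := by
      rwa [ENNReal.div_le_iff_le_mul (Or.inl two_ne_zero) (Or.inl ofNat_ne_top)] at h3
    rw [ENNReal.div_le_iff_le_mul (Or.inl (by norm_num : (4 : ℝ≥0∞) ≠ 0))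
      (Or.inl (by norm_num : (4 : ℝ≥0∞) ≠ ∞))]
    calc μ (K N) ≤ (2 * max (μ B₁) (μ B₂)) * 2 := h4
      _ = max (μ B₁) (μ B₂) * 4 := by ring
  have hfg' : ∀ x, f (g x) = g (f x) := fun x => congrFun hcomm x
  rcases le_total (μ B₁) (μ B₂) with hcmp | hcmp
  · refine ⟨B₂, hB₂m, ?_, ?_, ?_⟩
    · exact fun x hx => hx.1.1
    · rw [max_eq_right hcmp] at hquarter
      exact hKbound.trans hquarter
    · ext x
      simp only [Set.mem_inter_iff, Set.mem_preimage, Set.mem_empty_iff_false, iff_false]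
      rintro ⟨hx1, hx2⟩
      have h1 : g (f x) ∈ AT T := hx1.2.2
      have h2 : f (g x) ∉ AT T := hx2.2.1
      rw [hfg' x] at h2
      exact h2 h1
  · refine ⟨B₁, hB₁m, ?_, ?_, ?_⟩
    · exact fun x hx => hx.1.1
    · rw [max_eq_left hcmp] at hquarter
      exact hKbound.trans hquarter
    · ext x
      simp only [Set.mem_inter_iff, Set.mem_preimage, Set.mem_empty_iff_false, iff_false]
      rintro ⟨hx1, hx2⟩
      have h1 : g (f x) ∉ AT T := hx1.2.2
      have h2 : f (g x) ∈ AT T := hx2.2.1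
      rw [hfg' x] at h2
      exact h1 h2
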